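/- Let 𝒯 = (𝒳, π, 𝒮) be a hypergraph transformation. Then for every distinguished hypergraph S ∈ 𝒮, the set 𝒮_S (the subset of 𝒟_S consisting of those T with V(π(T)) ∩ V(S ⊖ T) = ∅) equals {S}. -/

import Mathlib

open Classical

universe u

/-- A (finite) hypergraph over a vertex universe `V`: a finite vertex set together with a
finite set of nonempty hyperedges, each a subset of the vertex set. -/
structure FinHypergraph (V : Type u) where
  verts : Set V
  edges : Set (Set V)
  verts_finite : verts.Finite
  edges_finite : edges.Finite
  edge_sub : ∀ e ∈ edges, e ⊆ verts
  edge_nonempty : ∀ e ∈ edges, e.Nonempty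

namespace FinHypergraph

variable {V : Type u}

/-- The null hypergraph `𝒩`. -/
def Null : FinHypergraph V :=
  ⟨∅, ∅, Set.finite_empty, Set.finite_empty, by simp, by simp⟩

/-- Direct sum (hypergraph union) of two hypergraphs. -/
def dSum (X Y : FinHypergraph V) : FinHypergraph V where
  verts := X.verts ∪ Y.verts
  edges := X.edges ∪ Y.edges
  verts_finite := X.verts_finite.union Y.verts_finite
  edges_finite := X.edges_finite.union Y.edges_finite
  edge_sub := by
    rintro e (he | he)
    · exact (X.edge_sub e he).trans Set.subset_union_left
    · exact (Y.edge_sub e he).trans Set.subset_union_right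
  edge_nonempty := by
    rintro e (he | he)
    · exact X.edge_nonempty e he
    · exact Y.edge_nonempty e he

/-- Direct sum of a set of (pairwise disjoint) hypergraphs; the null hypergraph when the
unions fail to be finite.  The direct sum of the empty set is the null hypergraph. -/
noncomputable def bigSum (A : Set (FinHypergraph V)) : FinHypergraph V :=
  if h : (⋃ X ∈ A, X.verts).Finite ∧ (⋃ X ∈ A, X.edges).Finite then
    { verts := ⋃ X ∈ A, X.verts
      edges := ⋃ X ∈ A, X.edges
      verts_finite := h.1
      edges_finite := h.2
      edge_sub := by
        intro e he
        simp only [Set.mem_iUnion] at he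
        obtain ⟨X, hX, heX⟩ := he
        intro v hv
        simp only [Set.mem_iUnion]
        exact ⟨X, hX, X.edge_sub e heX hv⟩
      edge_nonempty := by
        intro e he
        simp only [Set.mem_iUnion] at he
        obtain ⟨X, hX, heX⟩ := he
        exact X.edge_nonempty e heX }
  else Null

/-- The direct difference `X ⊖ Z`: the unique hypergraph `W` vertex disjoint from `Z`
with `X = W ⊕ Z`, when it exists. -/
noncomputable def dDiff (X Z : FinHypergraph V) : FinHypergraph V :=
  if h : ∃ W : FinHypergraph V, Disjoint W.verts Z.verts ∧ X = dSum W Z then h.choose else X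

/-- Two vertices are connected in `X` if there is a walk between them. -/
def Connected (X : FinHypergraph V) (a b : V) : Prop :=
  a ∈ X.verts ∧ Relation.ReflTransGen (fun u w => ∃ e ∈ X.edges, u ∈ e ∧ w ∈ e) a b

/-- `C` is a connected component of `X`: its vertex set is a connectivity class of `X`
and its edges are the edges of `X` lying inside it. -/
def IsComponent (X C : FinHypergraph V) : Prop :=
  (∃ v ∈ X.verts, C.verts = {w | Connected X v w}) ∧
  C.edges = {e ∈ X.edges | e ⊆ C.verts}

/-- The set `𝒞(X)` of connected components of `X`. -/
def comps (X : FinHypergraph V) : Set (FinHypergraph V) := {C | IsComponent X C}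

/-- Component disjointness: `𝒞(X) ∩ 𝒞(Y) = ∅`. -/
def CompDisjoint (X Y : FinHypergraph V) : Prop := comps X ∩ comps Y = ∅

/-- `X ∧ H`: the union (direct sum) of the components of `X` meeting some hyperedge in `H`. -/
noncomputable def wedge (X : FinHypergraph V) (H : Set (Set V)) : FinHypergraph V :=
  bigSum {C ∈ comps X | ∃ f ∈ H, (f ∩ C.verts).Nonempty}

/-- `𝒮` is component maximal in `𝒳` with `𝒮`-maximal subsets given by `D`. -/
def IsMaximalSubsets (dom S : Set (FinHypergraph V))
    (D : FinHypergraph V → Set (FinHypergraph V)) : Prop :=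
  ∀ X ∈ dom,
    D X ⊆ S ∧
    (D X).Pairwise CompDisjoint ∧
    (Null ∈ S → Null ∈ D X) ∧
    (∀ T ∈ D X, comps T ⊆ comps X) ∧
    (∀ s ∈ S, comps s ⊆ comps X → ∃ T ∈ D X, comps s ⊆ comps T)

/-- `𝒮_X := { S ∈ 𝒟_X | V(π(S)) ∩ V(X ⊖ S) = ∅ }`. -/
noncomputable def SXof (π : FinHypergraph V → FinHypergraph V)
    (D : FinHypergraph V → Set (FinHypergraph V)) (X : FinHypergraph V) : Set (FinHypergraph V) :=
  {s ∈ D X | Disjoint (π s).verts (dDiff X s).verts}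

/-- `(𝒳, π, 𝒮)` (with `𝒮`-maximal subsets `D`) is a hypergraph transformation:
nonredundancy, component maximality, and preservation of the direct sum decomposition. -/
def IsHGT (dom : Set (FinHypergraph V)) (π : FinHypergraph V → FinHypergraph V)
    (S : Set (FinHypergraph V)) (D : FinHypergraph V → Set (FinHypergraph V)) : Prop :=
  (∀ s ∈ S, comps s ∩ comps (π s) = ∅) ∧
  (Null ∈ S → π Null ≠ Null) ∧
  IsMaximalSubsets dom S D ∧
  ∀ X ∈ dom,
    (π '' SXof π D X).Pairwise (fun A B => Disjoint A.verts B.verts) ∧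
    Set.InjOn π (SXof π D X) ∧
    π X = dSum (dDiff X (bigSum (SXof π D X))) (bigSum (π '' SXof π D X))

/-- `𝒮'` is upward closed with respect to `𝒮`. -/
def UpwardClosed (S' S : Set (FinHypergraph V)) : Prop :=
  ∀ s ∈ S', ∀ t ∈ S, comps s ⊆ comps t → t ∈ S'

end FinHypergraph

open FinHypergraph

namespace HGTAux

variable {V : Type u}

lemma hg_ext {X Y : FinHypergraph V} (hv : X.verts = Y.verts) (he : X.edges = Y.edges) :
    X = Y := by
  cases X; cases Y; simp_all

lemma connected_mem_verts {X : FinHypergraph V} {a b : V} (h : Connected X a b) :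
    b ∈ X.verts := by
  obtain ⟨ha, hr⟩ := h
  induction hr with
  | refl => exact ha
  | tail _ h2 ih => obtain ⟨e, he, _, hbe⟩ := h2; exact X.edge_sub e he hbe

noncomputable def compOf (X : FinHypergraph V) (v : V) : FinHypergraph V where
  verts := {w | Connected X v w}
  edges := {e ∈ X.edges | e ⊆ {w | Connected X v w}}
  verts_finite := X.verts_finite.subset (fun _ hw => connected_mem_verts hw)
  edges_finite := X.edges_finite.subset (fun _ he => he.1)
  edge_sub := fun _ he => he.2
  edge_nonempty := fun e he => X.edge_nonempty e he.1

lemma compOf_mem_comps {X : FinHypergraph V} {v : V} (hv : v ∈ X.verts) :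
    compOf X v ∈ comps X := ⟨⟨v, hv, rfl⟩, rfl⟩

lemma mem_compOf_self {X : FinHypergraph V} {v : V} (hv : v ∈ X.verts) :
    v ∈ (compOf X v).verts := ⟨hv, Relation.ReflTransGen.refl⟩

lemma subset_aux {X Y : FinHypergraph V} (h : comps X ⊆ comps Y) :
    X.verts ⊆ Y.verts ∧ X.edges ⊆ Y.edges := by
  constructor
  · intro x hx
    have hC : compOf X x ∈ comps Y := h (compOf_mem_comps hx)
    obtain ⟨⟨v, hv, hverts⟩, _⟩ := hC
    have hxC : x ∈ (compOf X x).verts := mem_compOf_self hx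
    rw [hverts] at hxC
    exact connected_mem_verts hxC
  · intro e he
    obtain ⟨v, hv⟩ := X.edge_nonempty e he
    have hvX : v ∈ X.verts := X.edge_sub e he hv
    have heC : e ∈ (compOf X v).edges := by
      refine ⟨he, fun w hw => ⟨hvX, Relation.ReflTransGen.single ⟨e, he, hv, hw⟩⟩⟩
    have hC : compOf X v ∈ comps Y := h (compOf_mem_comps hvX)
    obtain ⟨_, hedges⟩ := hC
    rw [hedges] at heC
    exact heC.1

lemma eq_of_comps_eq {X Y : FinHypergraph V} (h : comps X = comps Y) : X = Y := by
  have h1 := subset_aux (h.le)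
  have h2 := subset_aux (h.ge)
  exact hg_ext (Set.Subset.antisymm h1.1 h2.1) (Set.Subset.antisymm h1.2 h2.2)

lemma edges_empty {X : FinHypergraph V} (h : X.verts = ∅) : X.edges = ∅ := by
  ext e
  simp only [Set.mem_empty_iff_false, iff_false]
  intro he
  obtain ⟨v, hv⟩ := X.edge_nonempty e he
  have := X.edge_sub e he hv
  rw [h] at this
  exact this

lemma null_of_comps_empty {X : FinHypergraph V} (h : comps X = ∅) : X = Null := by
  have hv : X.verts = ∅ := by
    ext x
    simp only [Set.mem_empty_iff_false, iff_false]
    intro hx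
    have := compOf_mem_comps hx
    rw [h] at this
    exact this
  exact hg_ext hv (edges_empty hv)

lemma dDiff_self_verts (s : FinHypergraph V) : (dDiff s s).verts = ∅ := by
  have hex : ∃ W : FinHypergraph V, Disjoint W.verts s.verts ∧ s = dSum W s :=
    ⟨Null, by simp [Null], hg_ext (by simp [dSum, Null]) (by simp [dSum, Null])⟩
  rw [dDiff, dif_pos hex]
  obtain ⟨h1, h2⟩ := hex.choose_spec
  have hsub : hex.choose.verts ⊆ s.verts := by
    have := congrArg FinHypergraph.verts h2
    rw [show (dSum hex.choose s).verts = hex.choose.verts ∪ s.verts from rfl] at this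
    intro x hx
    have hx2 : x ∈ hex.choose.verts ∪ s.verts := Or.inl hx
    rwa [← this] at hx2
  exact h1.eq_bot_of_le hsub

end HGTAux

open HGTAux

theorem stmt7 {V : Type u} (dom S : Set (FinHypergraph V))
    (π : FinHypergraph V → FinHypergraph V) (D : FinHypergraph V → Set (FinHypergraph V))
    (hsub : S ⊆ dom) (hT : IsHGT dom π S D) :
    ∀ s ∈ S, SXof π D s = {s} := by
  intro s hs
  obtain ⟨hnonred, hnull, hmax, hdecomp⟩ := hT
  have hsdom : s ∈ dom := hsub hs
  obtain ⟨hDsub, hpairwise, hNullD, hcompsub, hmaxi⟩ := hmax s hsdom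
  -- s ∈ D s
  obtain ⟨T, hTD, hsT⟩ := hmaxi s hs (Set.Subset.refl _)
  have hTs : T = s := eq_of_comps_eq (Set.Subset.antisymm (hcompsub T hTD) hsT)
  have hsD : s ∈ D s := hTs ▸ hTD
  have hsSX : s ∈ SXof π D s := by
    refine ⟨hsD, ?_⟩
    rw [dDiff_self_verts]
    exact Set.disjoint_empty _
  -- any other element of SXof π D s is Null
  have key : ∀ u ∈ SXof π D s, u ≠ s → u = Null := by
    intro u hu hus
    have huD : u ∈ D u ∨ True := Or.inr trivial
    have hdisj : CompDisjoint u s := hpairwise hu.1 hsD hus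
    have hsubc : comps u ⊆ comps s := hcompsub u hu.1
    apply null_of_comps_empty
    apply Set.subset_empty_iff.mp
    intro C hC
    have : C ∈ comps u ∩ comps s := ⟨hC, hsubc hC⟩
    rw [hdisj] at this
    exact this
  ext t
  simp only [Set.mem_singleton_iff]
  constructor
  · intro htSX
    by_contra hts
    have htN : t = Null := key t htSX hts
    have hNSX : Null ∈ SXof π D s := htN ▸ htSX
    have hsN : s ≠ Null := fun h => hts (htN.trans h.symm)
    have hNS : Null ∈ S := hDsub hNSX.1
    have hπN : π Null ≠ Null := hnull hNS
    obtain ⟨hpairw, hinj, hdec⟩ := hdecomp s hsdom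
    have hSXeq : SXof π D s = {s, Null} := by
      apply Set.Subset.antisymm
      · intro u hu
        by_cases hus : u = s
        · exact Or.inl hus
        · exact Or.inr (key u hu hus)
      · rintro u (rfl | rfl)
        · exact hsSX
        · exact hNSX
    have himg : π '' SXof π D s = {π s, π Null} := by
      rw [hSXeq, Set.image_pair]
    have hfin : (⋃ X ∈ π '' SXof π D s, X.verts).Finite ∧
        (⋃ X ∈ π '' SXof π D s, X.edges).Finite := by
      rw [himg]
      constructor
      · rw [Set.biUnion_pair]
        exact (π s).verts_finite.union (π Null).verts_finite
      · rw [Set.biUnion_pair]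
        exact (π s).edges_finite.union (π Null).edges_finite
    have hBverts : (bigSum (π '' SXof π D s)).verts = (π s).verts ∪ (π Null).verts := by
      rw [bigSum, dif_pos hfin]
      show (⋃ X ∈ π '' SXof π D s, X.verts) = _
      rw [himg, Set.biUnion_pair]
    have hsubN : (π Null).verts ⊆ (π s).verts := by
      have hv := congrArg FinHypergraph.verts hdec
      rw [show (dSum (dDiff s (bigSum (SXof π D s))) (bigSum (π '' SXof π D s))).verts
          = (dDiff s (bigSum (SXof π D s))).verts ∪ (bigSum (π '' SXof π D s)).verts from rfl,
          hBverts] at hv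
      intro x hx
      rw [hv]
      exact Or.inr (Or.inr hx)
    have hdisjps : Disjoint (π s).verts (π Null).verts := by
      refine hpairw (Set.mem_image_of_mem π hsSX) (Set.mem_image_of_mem π hNSX) ?_
      intro h
      exact hsN (hinj hsSX hNSX h)
    have hNverts : (π Null).verts = ∅ := hdisjps.symm.eq_bot_of_le hsubN
    exact hπN (hg_ext hNverts (edges_empty hNverts))
  · rintro rfl
    exact hsSX
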